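/- Let R be a commutative Noetherian unitary ring. Then the Erdős-Burgess constant of the multiplicative semigroup of R is finite if and only if R is finite. -/

import Mathlib

/-- Product of the nonempty list `a :: l` in a semigroup. -/
def sprod {α : Type*} [Mul α] (a : α) (l : List α) : α := l.foldl (· * ·) a

/-- A list is idempotent-product free if no nonempty sublist has idempotent product. -/
def IdemProdFree {α : Type*} [Mul α] (l : List α) : Prop :=
  ∀ (a : α) (t : List α), (a :: t).Sublist l → ¬ IsIdempotentElem (sprod a t)

/-- The Erdős–Burgess constant of a (commutative) semigroup, as an extended natural:
the supremum of `|T| + 1` over all idempotent-product free sequences `T`. -/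
noncomputable def EB (α : Type*) [Mul α] : ℕ∞ :=
  ⨆ l ∈ {l : List α | IdemProdFree l}, ((l.length : ℕ∞) + 1)


theorem foldl_mul_replicate {α : Type*} [Monoid α] (x a : α) (j : ℕ) :
    (List.replicate j x).foldl (· * ·) a = a * x ^ j := by
  induction j generalizing a with
  | zero => simp
  | succ n ih => rw [List.replicate_succ, List.foldl_cons, ih, pow_succ', ← mul_assoc]

theorem pow_eventually_idem {R : Type*} [CommMonoid R] [Finite R] (x : R) :
    IsIdempotentElem (x ^ (Nat.card R + 1).factorial) := by
  set n := Nat.card R with hn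
  haveI : Fintype R := Fintype.ofFinite R
  obtain ⟨i, j, hij, hpow⟩ := Fintype.exists_ne_map_eq_of_card_lt
    (fun i : Fin (n + 1) => x ^ ((i : ℕ) + 1))
    (by simp [hn, Nat.card_eq_fintype_card])
  wlog hlt : (i : ℕ) < (j : ℕ) generalizing i j
  · exact this j i hij.symm hpow.symm (by omega)
  have hstep : ∀ a, (i : ℕ) + 1 ≤ a → x ^ a = x ^ (a + ((j : ℕ) - (i : ℕ))) := by
    intro a ha
    have h1 : x ^ a = x ^ ((i:ℕ)+1) * x ^ (a - ((i:ℕ)+1)) := by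
      rw [← pow_add]; congr 1; omega
    have h2 : x ^ (a + ((j:ℕ) - (i:ℕ))) = x ^ ((j:ℕ)+1) * x ^ (a - ((i:ℕ)+1)) := by
      rw [← pow_add]; congr 1; omega
    rw [h1, h2, hpow]
  have hiter : ∀ s a, (i : ℕ) + 1 ≤ a → x ^ a = x ^ (a + s * ((j : ℕ) - (i : ℕ))) := by
    intro s
    induction s with
    | zero => simp
    | succ s ih =>
      intro a ha
      rw [ih a ha, hstep (a + s * ((j:ℕ) - (i:ℕ))) (by omega)]
      congr 1; ring
  set M := (n + 1).factorial with hM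
  have hdvd : ((j : ℕ) - (i : ℕ)) ∣ M := Nat.dvd_factorial (by omega) (by omega)
  have hiM : (i : ℕ) + 1 ≤ M := le_trans (by omega) (Nat.self_le_factorial _)
  show x ^ M * x ^ M = x ^ M
  rw [← pow_add]
  have := hiter (M / ((j:ℕ) - (i:ℕ))) M hiM
  rw [Nat.div_mul_cancel hdvd] at this
  exact this.symm


theorem finite_of_pow_idem_domain (K : Type*) [CommRing K] [IsDomain K] (N : ℕ) (hN : 1 ≤ N)
    (h : ∀ x : K, IsIdempotentElem (x ^ N)) : Finite K := by
  have hp : (Polynomial.X ^ (2*N) - Polynomial.X ^ N : Polynomial K) ≠ 0 := by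
    intro h0
    have hc := congrArg (Polynomial.coeff · (2*N)) h0
    have : ¬ (2*N = N) := by omega
    simp [Polynomial.coeff_X_pow, this] at hc
  have hfin := Polynomial.finite_setOf_isRoot hp
  refine Set.finite_univ_iff.mp (hfin.subset ?_)
  intro x _
  have hx : x ^ N * x ^ N = x ^ N := h x
  simp only [Set.mem_setOf_eq, Polynomial.IsRoot, Polynomial.eval_sub, Polynomial.eval_pow,
    Polynomial.eval_X, two_mul, pow_add, Polynomial.eval_mul, hx, sub_self]

theorem finite_of_pow_idem_reduced (R : Type*) [CommRing R] [IsNoetherianRing R] [IsReduced R]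
    (N : ℕ) (hN : 1 ≤ N) (h : ∀ x : R, IsIdempotentElem (x ^ N))
    : Finite R := by
  have hfin : (minimalPrimes R).Finite := minimalPrimes.finite_of_isNoetherianRing R
  have : Finite ↥(minimalPrimes R) := hfin
  -- the map into the product of quotients
  let f : R →+* ∀ p : minimalPrimes R, R ⧸ (p : Ideal R) :=
    Pi.ringHom fun p => Ideal.Quotient.mk (p : Ideal R)
  have hinj : Function.Injective f := by
    rw [injective_iff_map_eq_zero]
    intro a ha
    have hmem : a ∈ sInf (Ideal.minimalPrimes (⊥ : Ideal R)) := by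
      rw [Submodule.mem_sInf]
      intro p hp
      have := congrFun ha ⟨p, hp⟩
      exact Ideal.Quotient.eq_zero_iff_mem.mp this
    rw [Ideal.sInf_minimalPrimes] at hmem
    have hnil : IsNilpotent a := mem_nilradical.mp hmem
    exact hnil.eq_zero
  haveI hfac : ∀ p : minimalPrimes R, Finite (R ⧸ (p : Ideal R)) := by
    intro p
    have hprime : (p : Ideal R).IsPrime := p.2.1.1
    refine finite_of_pow_idem_domain _ N hN ?_
    intro x
    obtain ⟨y, rfl⟩ := Ideal.Quotient.mk_surjective (I := (p : Ideal R)) x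
    have := h y
    unfold IsIdempotentElem at *
    rw [← map_pow, ← map_mul, this]
  exact Finite.of_injective f hinj


section Aux
set_option linter.unusedSectionVars false
variable (R : Type*) [CommRing R] [IsNoetherianRing R]

theorem quot_idem (I : Ideal R) (N : ℕ) (h : ∀ x : R, IsIdempotentElem (x ^ N)) :
    ∀ x : R ⧸ I, IsIdempotentElem (x ^ N) := by
  intro x
  obtain ⟨y, rfl⟩ := Ideal.Quotient.mk_surjective (I := I) x
  have hy : y ^ N * y ^ N = y ^ N := h y
  show _ * _ = _
  rw [← map_pow, ← map_mul, hy]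

theorem finite_quot_pow (N : ℕ) (hN : 1 ≤ N) (h : ∀ x : R, IsIdempotentElem (x ^ N)) :
    ∀ j, 1 ≤ j → Finite (R ⧸ (nilradical R)^j) := by
  intro j
  induction j with
  | zero => omega
  | succ j ih =>
    intro _
    rcases Nat.eq_zero_or_pos j with rfl | hj
    · -- base case j + 1 = 1
      haveI : IsReduced (R ⧸ nilradical R) :=
        (Ideal.isRadical_iff_quotient_reduced _).mp (Ideal.radical_isRadical _)
      have hfin : Finite (R ⧸ nilradical R) :=
        finite_of_pow_idem_reduced _ N hN (quot_idem R _ N h)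
      have heq : (nilradical R) ^ (0+1) = nilradical R := by rw [zero_add, pow_one]
      rw [heq]
      exact hfin
    · haveI ihf : Finite (R ⧸ (nilradical R)^j) := ih hj
      set I := nilradical R with hI
      set A := R ⧸ I^(j+1) with hA
      let mk : R →+* A := Ideal.Quotient.mk (I^(j+1))
      set J : Ideal A := (I^j).map mk with hJ
      -- J is finitely generated
      obtain ⟨s, hs⟩ : J.FG := IsNoetherian.noetherian J
      -- I^j kills J in A
      have key : ∀ c : R, c ∈ I^j → ∀ g ∈ J, mk c * g = 0 := by
        intro c hc g hg
        rw [hJ, Ideal.mem_map_iff_of_surjective mk Ideal.Quotient.mk_surjective] at hg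
        obtain ⟨b, hb, rfl⟩ := hg
        rw [← map_mul]
        rw [Ideal.Quotient.eq_zero_iff_mem]
        have h1 : c * b ∈ I ^ (j + j) := by rw [pow_add]; exact Ideal.mul_mem_mul hc hb
        exact Ideal.pow_le_pow_right (by omega) h1
      -- a surjection from a finite type onto J
      have hsJ : (↑s : Set A) ⊆ (J : Set A) := hs ▸ Ideal.subset_span
      let lift : R ⧸ I^j → R := fun q => Function.surjInv Ideal.Quotient.mk_surjective q
      have hlift : ∀ q, Ideal.Quotient.mk (I^j) (lift q) = q := fun q =>
        Function.surjInv_eq _ q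
      let F : (↥s → R ⧸ I^j) → ↥J := fun c =>
        ⟨∑ g : ↥s, mk (lift (c g)) * (g : A),
          Ideal.sum_mem _ fun g _ => Ideal.mul_mem_left _ _ (hsJ g.2)⟩
      have hFsurj : Function.Surjective F := by
        rintro ⟨a, ha⟩
        rw [← hs, ← Ideal.submodule_span_eq] at ha
        obtain ⟨f, -, hf⟩ := Submodule.mem_span_finset.mp ha
        choose r hr using fun g : A => Ideal.Quotient.mk_surjective (I := I^(j+1)) (f g)
        refine ⟨fun g => Ideal.Quotient.mk (I^j) (r (g : A)), ?_⟩
        apply Subtype.ext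
        show (∑ g : ↥s, mk (lift (Ideal.Quotient.mk (I^j) (r (g:A)))) * (g : A)) = a
        have hterm : ∀ g : ↥s, mk (lift (Ideal.Quotient.mk (I^j) (r (g:A)))) * (g : A)
            = mk (r (g:A)) * (g : A) := by
          intro g
          have hmem : lift (Ideal.Quotient.mk (I^j) (r (g:A))) - r (g:A) ∈ I^j := by
            rw [← Ideal.Quotient.mk_eq_mk_iff_sub_mem, hlift]
          have := key _ hmem (g : A) (hsJ g.2)
          rw [map_sub, sub_mul] at this
          exact sub_eq_zero.mp this
        rw [Finset.sum_congr rfl fun g _ => hterm g,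
          Finset.sum_coe_sort (f := fun g => mk (r g) * g), ← hf]
        exact Finset.sum_congr rfl fun g hg => by rw [hr g, smul_eq_mul]
      haveI hJfin : Finite ↥J := Finite.of_surjective F hFsurj
      -- the quotient A ⧸ J is finite
      haveI hAJ : Finite (A ⧸ J) := by
        have e1 : (A ⧸ J) ≃+* R ⧸ (I^(j+1) ⊔ I^j) := DoubleQuot.quotQuotEquivQuotSup _ _
        have heq : I^(j+1) ⊔ I^j = I^j := sup_eq_right.mpr (Ideal.pow_le_pow_right (by omega))
        have e2 : (R ⧸ (I^(j+1) ⊔ I^j)) ≃+* R ⧸ I^j := Ideal.quotEquivOfEq heq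
        exact Finite.of_equiv _ (e1.trans e2).toEquiv.symm
      -- combine
      let Φ : ↥J × (A ⧸ J) → A := fun p =>
        (p.1 : A) + Function.surjInv (Ideal.Quotient.mk_surjective (I := J)) p.2
      have hΦ : Function.Surjective Φ := by
        intro a
        set q := Ideal.Quotient.mk J a with hq
        have hmem : a - Function.surjInv (Ideal.Quotient.mk_surjective (I := J)) q ∈ J := by
          rw [← Ideal.Quotient.mk_eq_mk_iff_sub_mem]
          exact (Function.surjInv_eq _ _).symm
        exact ⟨⟨⟨_, hmem⟩, q⟩, by simp [Φ]⟩
      exact Finite.of_surjective Φ hΦ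

theorem finite_of_pow_idem (N : ℕ) (hN : 1 ≤ N)
    (h : ∀ x : R, IsIdempotentElem (x ^ N)) : Finite R := by
  obtain ⟨k, hk⟩ := IsNoetherianRing.isNilpotent_nilradical R
  rcases Nat.eq_zero_or_pos k with rfl | hkpos
  · rw [pow_zero, Ideal.one_eq_top] at hk
    have h1 : (1 : R) ∈ (⊤ : Ideal R) := trivial
    rw [hk] at h1
    have h10 : (1 : R) = 0 := by simpa using h1
    haveI : Subsingleton R := subsingleton_of_zero_eq_one h10.symm
    exact Finite.of_subsingleton
  · haveI := finite_quot_pow R N hN h k hkpos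
    refine Finite.of_injective (Ideal.Quotient.mk ((nilradical R) ^ k)) fun x y hxy => ?_
    rw [Ideal.Quotient.mk_eq_mk_iff_sub_mem, show (nilradical R) ^ k = ⊥ from hk] at hxy
    have := (Submodule.mem_bot R).mp hxy
    exact sub_eq_zero.mp this

theorem finite_of_EB_ne_top (h : EB R ≠ ⊤) : Finite R := by
  obtain ⟨m, hm⟩ := WithTop.ne_top_iff_exists.mp h
  have hlen : ∀ l : List R, IdemProdFree l → l.length + 1 ≤ m := by
    intro l hl
    have hle : ((l.length : ℕ∞) + 1) ≤ EB R := by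
      rw [EB]; exact le_iSup_of_le l (le_iSup_of_le hl le_rfl)
    rw [← hm] at hle
    exact Nat.cast_le.mp (by exact_mod_cast hle)
  have hidem : ∀ x : R, IsIdempotentElem (x ^ m.factorial) := by
    intro x
    have hnotfree : ¬ IdemProdFree (List.replicate m x) := by
      intro hfree
      have := hlen _ hfree
      simp only [List.length_replicate] at this
      omega
    simp only [IdemProdFree, not_forall, not_not] at hnotfree
    obtain ⟨a, t, hsub, hid⟩ := hnotfree
    have hmem : ∀ b ∈ a :: t, b = x := fun b hb => List.eq_of_mem_replicate (hsub.subset hb)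
    have ha : a = x := hmem a (by simp)
    have ht : t = List.replicate t.length x :=
      List.eq_replicate_length.mpr fun b hb => hmem b (by simp [hb])
    have hk1 : 1 ≤ t.length + 1 := by omega
    have hkm : t.length + 1 ≤ m := by simpa using hsub.length_le
    have hprod : sprod a t = x ^ (t.length + 1) := by
      rw [sprod, ht, ha, foldl_mul_replicate, ← pow_succ', List.length_replicate]
    rw [hprod] at hid
    have hdvd : t.length + 1 ∣ m.factorial := Nat.dvd_factorial hk1 hkm
    have hx : x ^ m.factorial = (x ^ (t.length + 1)) ^ (m.factorial / (t.length + 1)) := by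
      rw [← pow_mul, Nat.mul_div_cancel' hdvd]
    rw [hx]
    exact IsIdempotentElem.pow _ hid
  exact finite_of_pow_idem R m.factorial
    (Nat.one_le_iff_ne_zero.mpr (Nat.factorial_ne_zero m)) hidem

end Aux

theorem EB_ne_top_of_finite (R : Type*) [CommMonoid R] [Finite R] : EB R ≠ ⊤ := by
  classical
  set n := Nat.card R with hn
  set M := (n + 1).factorial with hM
  have hM1 : 1 ≤ M := Nat.one_le_iff_ne_zero.mpr (Nat.factorial_ne_zero _)
  have hbound : ∀ l : List R, IdemProdFree l → l.length ≤ n * (M - 1) := by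
    intro l hl
    by_contra hlen
    push_neg at hlen
    -- some element occurs at least M times
    have hex : ∃ a ∈ l.toFinset, M ≤ l.count a := by
      by_contra hc
      push_neg at hc
      have hsum : l.length = ∑ a ∈ l.toFinset, l.count a :=
        (List.sum_toFinset_count_eq_length l).symm
      have hle : ∑ a ∈ l.toFinset, l.count a ≤ ∑ _a ∈ l.toFinset, (M - 1) :=
        Finset.sum_le_sum fun a ha => by have := hc a ha; omega
      have hcard : l.toFinset.card ≤ n := by
        haveI : Fintype R := Fintype.ofFinite R
        rw [hn, Nat.card_eq_fintype_card]
        exact Finset.card_le_univ _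
      rw [Finset.sum_const, smul_eq_mul] at hle
      have : l.length ≤ n * (M - 1) :=
        hsum ▸ (hle.trans (Nat.mul_le_mul_right _ hcard))
      omega
    obtain ⟨a, _, hcount⟩ := hex
    have hsub : (List.replicate M a).Sublist l := List.replicate_sublist_iff.mpr hcount
    have hrepl : List.replicate M a = a :: List.replicate (M - 1) a := by
      rw [← List.replicate_succ]; congr 1; omega
    refine hl a (List.replicate (M - 1) a) (hrepl ▸ hsub) ?_
    have : sprod a (List.replicate (M - 1) a) = a ^ M := by
      rw [sprod, foldl_mul_replicate, ← pow_succ']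
      congr 1; omega
    rw [this, hM]
    exact pow_eventually_idem a
  have hEB : EB R ≤ ((n * (M - 1) + 1 : ℕ) : ℕ∞) := by
    rw [EB]
    refine iSup₂_le fun l hl => ?_
    have h1 := hbound l hl
    calc (l.length : ℕ∞) + 1 ≤ ((n * (M - 1) : ℕ) : ℕ∞) + 1 := by
          exact add_le_add_left (Nat.cast_le.mpr h1) 1
      _ = ((n * (M - 1) + 1 : ℕ) : ℕ∞) := by push_cast; ring
  exact ne_top_of_le_ne_top (WithTop.natCast_ne_top _) hEB

theorem stmt_17 (R : Type*) [CommRing R] [IsNoetherianRing R] :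
    EB R ≠ ⊤ ↔ Finite R :=
  ⟨fun h => finite_of_EB_ne_top R h, fun _ => EB_ne_top_of_finite R⟩
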